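/- For d ≥ 3, 1 ≤ r < d/2, the two-variable generating function f_{d,r}(x;q) = Σ_{m,n≥0} β_{d,r,0}(m,n) x^m q^n satisfies the q-difference equation f_{d,r}(x) = (1 + x q^r + x q^{d-r}) f_{d,r}(x q^d) + x q^d (1 - x q^d) f_{d,r}(x q^{2d}). -/

import Mathlib

/-- A Schur-type partition for parameters `d, r`, represented as a weakly decreasing
list of parts: all parts are positive and congruent to `0`, `r` or `d - r` mod `d`,
consecutive parts differ by at least `d`, and by strictly more than `d` whenever
the larger part is divisible by `d`. -/
def IsSchurPartition (d r : ℕ) (l : List ℕ) : Prop :=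
  (∀ x ∈ l, 0 < x ∧ (x % d = 0 ∨ x % d = r ∨ x % d = d - r)) ∧
    l.Chain' (fun a b => b + d ≤ a ∧ (d ∣ a → b + d < a))

/-- `schurBeta d r m n` is the number of Schur-type partitions of `n` into exactly
`m` parts (the refined enumeration function `β_{d,r,0}(m,n)`, with
`β_{d,r,0}(0,0) = 1` counting the empty partition). -/
noncomputable def schurBeta (d r m n : ℕ) : ℕ :=
  Set.ncard {l : List ℕ | IsSchurPartition d r l ∧ l.length = m ∧ l.sum = n}

/-- The two-variable generating function
`f_{d,r}(x;q) = Σ_{m,n≥0} β_{d,r,0}(m,n) x^m q^n`. -/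
noncomputable def schurF (d r : ℕ) (x q : ℂ) : ℂ :=
  ∑' p : ℕ × ℕ, (schurBeta d r p.1 p.2 : ℂ) * x ^ p.1 * q ^ p.2

set_option linter.unusedVariables false

namespace SchurQD

/-- The gap relation between consecutive parts. -/
def SRel (d : ℕ) (a b : ℕ) : Prop := b + d ≤ a ∧ (d ∣ a → b + d < a)

/-- Allowed part values. -/
def Allowed (d r x : ℕ) : Prop := 0 < x ∧ (x % d = 0 ∨ x % d = r ∨ x % d = d - r)

lemma srel_trans {d : ℕ} {a b c : ℕ} (h1 : SRel d a b) (h2 : SRel d b c) : SRel d a c := by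
  obtain ⟨h1a, h1b⟩ := h1; obtain ⟨h2a, _⟩ := h2
  constructor <;> omega

lemma isSchur_iff_pairwise (d r : ℕ) (l : List ℕ) :
    IsSchurPartition d r l ↔ ((∀ x ∈ l, Allowed d r x) ∧ l.Pairwise (SRel d)) := by
  haveI : IsTrans ℕ (SRel d) := ⟨fun _ _ _ => srel_trans⟩
  show ((∀ x ∈ l, Allowed d r x) ∧ l.Chain' (SRel d)) ↔ _
  rw [show l.Chain' (SRel d) ↔ l.Pairwise (SRel d) from List.isChain_iff_pairwise (R := SRel d)]

section Params
variable {d r : ℕ}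

lemma r_le_of_allowed (hd : 3 ≤ d) (hr1 : 1 ≤ r) (hr2 : 2 * r < d)
    {x : ℕ} (hx : Allowed d r x) : r ≤ x := by
  obtain ⟨hpos, hres⟩ := hx
  rcases hres with h | h | h
  · have : d ∣ x := Nat.dvd_of_mod_eq_zero h
    have := Nat.le_of_dvd hpos this
    omega
  · have := Nat.mod_le x d; omega
  · have := Nat.mod_le x d; omega

lemma allowed_eq_r_of_lt (hr1 : 1 ≤ r) (hr2 : 2 * r < d)
    {x : ℕ} (hx : Allowed d r x) (hlt : x < d - r) : x = r := by
  obtain ⟨hpos, hres⟩ := hx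
  have hxd : x < d := by omega
  rw [Nat.mod_eq_of_lt hxd] at hres
  omega

lemma allowed_cases_le_d (hr1 : 1 ≤ r) (hr2 : 2 * r < d)
    {x : ℕ} (hx : Allowed d r x) (hle : x ≤ d) :
    x = r ∨ x = d - r ∨ x = d := by
  obtain ⟨hpos, hres⟩ := hx
  rcases Nat.lt_or_ge x d with h | h
  · rw [Nat.mod_eq_of_lt h] at hres; omega
  · omega

end Params

end SchurQD

namespace SchurQD

/-- The set of Schur partitions with `m` parts and sum `n`. -/
def SP (d r m n : ℕ) : Set (List ℕ) :=
  {l : List ℕ | IsSchurPartition d r l ∧ l.length = m ∧ l.sum = n}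

lemma schurBeta_eq (d r m n : ℕ) : schurBeta d r m n = (SP d r m n).ncard := rfl

/-- Schur partitions with all parts `> d`. -/
def Tinf (d r M N : ℕ) : Set (List ℕ) := {l ∈ SP d r M N | ∀ x ∈ l, d < x}

/-- Schur partitions with smallest (= last) part `s`. -/
def Tlast (d r s M N : ℕ) : Set (List ℕ) := {l ∈ SP d r M N | l.getLast? = some s}

lemma mem_le_sum {l : List ℕ} {x : ℕ} (hx : x ∈ l) : x ≤ l.sum := by
  induction l with
  | nil => simp at hx
  | cons a t ih =>
    rcases List.mem_cons.1 hx with h | h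
    · simp [h, List.sum_cons]
    · have := ih h; simp [List.sum_cons]; omega

lemma mul_length_le_sum {l : List ℕ} {c : ℕ} (h : ∀ x ∈ l, c ≤ x) :
    c * l.length ≤ l.sum := by
  induction l with
  | nil => simp
  | cons a t ih =>
    have ha := h a (List.mem_cons_self)
    have := ih (fun x hx => h x (List.mem_cons_of_mem a hx))
    simp only [List.length_cons, List.sum_cons]
    calc c * (t.length + 1) = c * t.length + c := by ring
    _ ≤ t.sum + a := by omega
    _ = a + t.sum := by omega

lemma finite_len_bdd (m n : ℕ) : {l : List ℕ | l.length = m ∧ ∀ x ∈ l, x ≤ n}.Finite := by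
  induction m with
  | zero =>
    apply Set.Finite.subset (Set.finite_singleton ([] : List ℕ))
    rintro l ⟨hl, -⟩
    simp [List.length_eq_zero_iff.1 hl]
  | succ m ih =>
    apply Set.Finite.subset (Set.Finite.image2 List.cons (Set.finite_Iic n) ih)
    rintro l ⟨hl, hb⟩
    rcases l with _ | ⟨a, t⟩
    · simp at hl
    · exact Set.mem_image2_of_mem (hb a (List.mem_cons_self))
        ⟨by simpa using hl, fun x hx => hb x (List.mem_cons_of_mem a hx)⟩

lemma SP_finite (d r m n : ℕ) : (SP d r m n).Finite := by
  apply Set.Finite.subset (finite_len_bdd m n)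
  rintro l ⟨_, hlen, hsum⟩
  exact ⟨hlen, fun x hx => hsum ▸ mem_le_sum hx⟩

lemma Tinf_finite (d r M N : ℕ) : (Tinf d r M N).Finite :=
  (SP_finite d r M N).subset fun _ h => h.1

lemma Tlast_finite (d r s M N : ℕ) : (Tlast d r s M N).Finite :=
  (SP_finite d r M N).subset fun _ h => h.1

end SchurQD

namespace SchurQD
variable {d r : ℕ}

lemma sum_map_add (c : ℕ) (l : List ℕ) :
    (l.map (· + c)).sum = l.sum + c * l.length := by
  induction l with
  | nil => simp
  | cons a t ih =>
    simp only [List.map_cons, List.sum_cons, List.length_cons, ih]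
    ring

lemma srel_add_mul {k a b : ℕ} : SRel d (a + k * d) (b + k * d) ↔ SRel d a b := by
  have hdvd : d ∣ a + k * d ↔ d ∣ a := by
    rw [add_comm]; exact Nat.dvd_add_right (dvd_mul_left d k)
  constructor
  · rintro ⟨h1, h2⟩
    exact ⟨by omega, fun hdv => by have := h2 (hdvd.2 hdv); omega⟩
  · rintro ⟨h1, h2⟩
    exact ⟨by omega, fun hdv => by have := h2 (hdvd.1 hdv); omega⟩

lemma allowed_add_mul {k x : ℕ} (h : Allowed d r x) : Allowed d r (x + k * d) := by
  obtain ⟨h1, h2⟩ := h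
  exact ⟨by omega, by rwa [Nat.add_mul_mod_self_right]⟩

lemma allowed_of_add_mul {k x : ℕ} (h : Allowed d r (x + k * d)) (hx : 0 < x) :
    Allowed d r x := by
  obtain ⟨_, h2⟩ := h
  rw [Nat.add_mul_mod_self_right] at h2
  exact ⟨hx, h2⟩

/-- Appending a smallest part `s` after shifting everything by `c`. -/
def appendMap (c s : ℕ) (l : List ℕ) : List ℕ := l.map (· + c) ++ [s]

lemma shift_injective (c : ℕ) : Function.Injective (fun l : List ℕ => l.map (· + c)) :=
  List.map_injective_iff.mpr (add_left_injective c)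

lemma appendMap_injective (c s : ℕ) : Function.Injective (appendMap c s) := by
  intro l1 l2 h
  unfold appendMap at h
  have h2 := congrArg List.dropLast h
  rw [List.dropLast_concat, List.dropLast_concat] at h2
  exact shift_injective c h2

lemma pairwise_shift {k : ℕ} {l : List ℕ} :
    (l.map (· + k * d)).Pairwise (SRel d) ↔ l.Pairwise (SRel d) := by
  rw [List.pairwise_map]
  constructor
  · intro h; exact h.imp (fun hab => srel_add_mul.mp hab)
  · intro h; exact h.imp (fun hab => srel_add_mul.mpr hab)

end SchurQD

namespace SchurQD
variable {d r : ℕ}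

lemma sum_map_sub {c : ℕ} {l : List ℕ} (h : ∀ x ∈ l, c ≤ x) :
    (l.map (· - c)).sum + c * l.length = l.sum := by
  induction l with
  | nil => simp
  | cons a t ih =>
    have ha := h a (List.mem_cons_self)
    have ht := ih (fun x hx => h x (List.mem_cons_of_mem a hx))
    simp only [List.map_cons, List.sum_cons, List.length_cons]
    have hc : c * (t.length + 1) = c * t.length + c := by ring
    omega

lemma map_sub_add {c : ℕ} {l : List ℕ} (h : ∀ x ∈ l, c ≤ x) :
    (l.map (· - c)).map (· + c) = l := by
  rw [List.map_map]
  have : ∀ x ∈ l, ((· + c) ∘ (· - c)) x = id x := by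
    intro x hx; have := h x hx; simp; omega
  rw [List.map_congr_left this, List.map_id]

lemma pairwise_unshift {k : ℕ} {l : List ℕ} (hpos : ∀ x ∈ l, k * d < x)
    (h : l.Pairwise (SRel d)) : (l.map (· - k * d)).Pairwise (SRel d) := by
  rw [List.pairwise_map]
  refine h.imp_of_mem ?_
  intro a b ha hb hab
  have ha' : a - k * d + k * d = a := Nat.sub_add_cancel (le_of_lt (hpos a ha))
  have hb' : b - k * d + k * d = b := Nat.sub_add_cancel (le_of_lt (hpos b hb))
  exact srel_add_mul.mp (show SRel d (a - k * d + k * d) (b - k * d + k * d) by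
    rw [ha', hb']; exact hab)

/-- Image of the `+d` shift: Schur partitions with all parts `> d`. -/
lemma image_shift_eq (m n : ℕ) :
    (fun l : List ℕ => l.map (· + 1 * d)) '' SP d r m n = Tinf d r m (n + m * (1 * d)) := by
  ext l'
  constructor
  · rintro ⟨l, ⟨hSch, hlen, hsum⟩, rfl⟩
    rw [isSchur_iff_pairwise] at hSch
    obtain ⟨hAll, hPw⟩ := hSch
    refine ⟨⟨?_, ?_, ?_⟩, ?_⟩
    · rw [isSchur_iff_pairwise]
      constructor
      · intro x hx
        obtain ⟨y, hy, rfl⟩ := List.mem_map.1 hx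
        exact allowed_add_mul (hAll y hy)
      · exact pairwise_shift.mpr hPw
    · simp [hlen]
    · rw [sum_map_add, hsum, hlen]; ring
    · intro x hx
      obtain ⟨y, hy, rfl⟩ := List.mem_map.1 hx
      have := (hAll y hy).1
      omega
  · rintro ⟨⟨hSch, hlen, hsum⟩, hgt⟩
    rw [isSchur_iff_pairwise] at hSch
    obtain ⟨hAll, hPw⟩ := hSch
    have hge : ∀ x ∈ l', 1 * d < x := by intro x hx; have := hgt x hx; omega
    refine ⟨l'.map (· - 1 * d), ⟨?_, ?_, ?_⟩, ?_⟩
    · rw [isSchur_iff_pairwise]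
      constructor
      · intro x hx
        obtain ⟨y, hy, rfl⟩ := List.mem_map.1 hx
        have h1 : y - 1 * d + 1 * d = y := Nat.sub_add_cancel (le_of_lt (hge y hy))
        exact allowed_of_add_mul (h1 ▸ hAll y hy) (by have := hge y hy; omega)
      · exact pairwise_unshift hge hPw
    · simp [hlen]
    · have h2 := sum_map_sub (l := l') (c := 1 * d) (fun x hx => le_of_lt (hge x hx))
      have h2' : (l'.map (· - 1 * d)).sum + m * (1 * d) = l'.sum := by
        rw [← h2, hlen]; ring
      generalize hX : m * (1 * d) = X at h2' hsum
      omega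
    · exact map_sub_add (fun x hx => le_of_lt (hge x hx))

/-- Generic image lemma for appending a smallest part `s` after a `+ k*d` shift. -/
lemma image_append (k s : ℕ) (P : ℕ → Prop)
    (hs : Allowed d r s)
    (hcross : ∀ y, Allowed d r y → P y → SRel d (y + k * d) s)
    (hback : ∀ x, Allowed d r x → SRel d x s → k * d < x ∧ P (x - k * d))
    (m n : ℕ) :
    appendMap (k * d) s '' {l | l ∈ SP d r m n ∧ ∀ x ∈ l, P x} =
      Tlast d r s (m + 1) (n + m * (k * d) + s) := by
  ext l'
  constructor
  · rintro ⟨l, ⟨⟨hSch, hlen, hsum⟩, hP⟩, rfl⟩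
    rw [isSchur_iff_pairwise] at hSch
    obtain ⟨hAll, hPw⟩ := hSch
    simp only [appendMap]
    refine ⟨⟨?_, ?_, ?_⟩, ?_⟩
    · rw [isSchur_iff_pairwise]
      constructor
      · intro x hx
        rcases List.mem_append.1 hx with hx | hx
        · obtain ⟨y, hy, rfl⟩ := List.mem_map.1 hx
          exact allowed_add_mul (hAll y hy)
        · rw [List.mem_singleton.1 hx]; exact hs
      · rw [List.pairwise_append]
        refine ⟨pairwise_shift.mpr hPw, List.pairwise_singleton _ _, ?_⟩
        intro a ha b hb
        rw [List.mem_singleton.1 hb]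
        obtain ⟨y, hy, rfl⟩ := List.mem_map.1 ha
        exact hcross y (hAll y hy) (hP y hy)
    · simp [appendMap, hlen]
    · show (l.map (· + k * d) ++ [s]).sum = _
      rw [List.sum_append, List.sum_singleton, sum_map_add, hsum, hlen]
      ring
    · exact List.getLast?_concat
  · rintro ⟨⟨hSch, hlen, hsum⟩, hlast⟩
    obtain ⟨init, rfl⟩ := List.getLast?_eq_some_iff.1 hlast
    rw [isSchur_iff_pairwise] at hSch
    obtain ⟨hAll, hPw⟩ := hSch
    rw [List.pairwise_append] at hPw
    obtain ⟨hPwi, -, hcr⟩ := hPw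
    have hAlli : ∀ x ∈ init, Allowed d r x :=
      fun x hx => hAll x (List.mem_append.2 (Or.inl hx))
    have hxbig : ∀ x ∈ init, k * d < x ∧ P (x - k * d) := fun x hx =>
      hback x (hAlli x hx) (hcr x hx s (List.mem_singleton_self s))
    have hleninit : init.length = m := by
      rw [List.length_append] at hlen; simpa using hlen
    refine ⟨init.map (· - k * d), ⟨⟨?_, ?_, ?_⟩, ?_⟩, ?_⟩
    · rw [isSchur_iff_pairwise]
      constructor
      · intro x hx
        obtain ⟨y, hy, rfl⟩ := List.mem_map.1 hx
        have h1 : y - k * d + k * d = y := Nat.sub_add_cancel (le_of_lt (hxbig y hy).1)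
        exact allowed_of_add_mul (h1 ▸ hAlli y hy) (Nat.sub_pos_of_lt (hxbig y hy).1)
      · exact pairwise_unshift (fun x hx => (hxbig x hx).1) hPwi
    · simp [hleninit]
    · have h2 := sum_map_sub (l := init) (c := k * d) (fun x hx => le_of_lt (hxbig x hx).1)
      have h2' : (init.map (· - k * d)).sum + m * (k * d) = init.sum := by
        rw [← h2, hleninit]; ring
      rw [List.sum_append, List.sum_singleton] at hsum
      generalize hX : m * (k * d) = X at h2' hsum
      omega
    · intro x hx
      obtain ⟨y, hy, rfl⟩ := List.mem_map.1 hx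
      exact (hxbig y hy).2
    · show (init.map (· - k * d)).map (· + k * d) ++ [s] = init ++ [s]
      rw [map_sub_add (fun x hx => le_of_lt (hxbig x hx).1)]

end SchurQD

namespace SchurQD
variable {d r : ℕ}

section WithParams
variable (hd : 3 ≤ d) (hr1 : 1 ≤ r) (hr2 : 2 * r < d)

set_option linter.unusedSectionVars false
include hd hr1 hr2

lemma allowed_r : Allowed d r r :=
  ⟨hr1, Or.inr (Or.inl (Nat.mod_eq_of_lt (by omega)))⟩

lemma allowed_dr : Allowed d r (d - r) :=
  ⟨by omega, Or.inr (Or.inr (Nat.mod_eq_of_lt (by omega)))⟩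

lemma allowed_d : Allowed d r d :=
  ⟨by omega, Or.inl (Nat.mod_self d)⟩

lemma image_r (m n : ℕ) :
    appendMap (1 * d) r '' {l | l ∈ SP d r m n ∧ ∀ x ∈ l, True} =
      Tlast d r r (m + 1) (n + m * (1 * d) + r) := by
  refine image_append 1 r _ (allowed_r hd hr1 hr2) ?_ ?_ m n
  · intro y hy _
    have hry := r_le_of_allowed hd hr1 hr2 hy
    constructor
    · omega
    · intro hdv
      have hdy : d ∣ y := by
        rw [add_comm] at hdv
        exact (Nat.dvd_add_right (dvd_mul_left d 1)).mp hdv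
      have := Nat.le_of_dvd hy.1 hdy
      omega
  · intro x hx hsr
    exact ⟨by have := hsr.1; omega, trivial⟩

lemma image_dr (m n : ℕ) :
    appendMap (1 * d) (d - r) '' {l | l ∈ SP d r m n ∧ ∀ x ∈ l, d - r ≤ x} =
      Tlast d r (d - r) (m + 1) (n + m * (1 * d) + (d - r)) := by
  refine image_append 1 (d - r) _ (allowed_dr hd hr1 hr2) ?_ ?_ m n
  · intro y hy hge
    constructor
    · omega
    · intro hdv
      have hdy : d ∣ y := by
        rw [add_comm] at hdv
        exact (Nat.dvd_add_right (dvd_mul_left d 1)).mp hdv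
      have := Nat.le_of_dvd hy.1 hdy
      omega
  · intro x hx hsr
    have := hsr.1
    constructor
    · omega
    · omega

lemma image_d (m n : ℕ) :
    appendMap (2 * d) d '' {l | l ∈ SP d r m n ∧ ∀ x ∈ l, True} =
      Tlast d r d (m + 1) (n + m * (2 * d) + d) := by
  refine image_append 2 d _ (allowed_d hd hr1 hr2) ?_ ?_ m n
  · intro y hy _
    constructor
    · omega
    · intro _
      have := hy.1
      omega
  · intro x hx hsr
    constructor
    · by_cases hdx : d ∣ x
      · have := hsr.2 hdx; omega
      · have hne : x ≠ 2 * d := by rintro rfl; exact hdx (dvd_mul_left d 2)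
        have := hsr.1; omega
    · trivial

end WithParams

/-- last element of a Schur list is ≤ every element. -/
lemma forall_srel_getLast {l : List ℕ} (h : l.Pairwise (SRel d)) (hne : l ≠ []) :
    ∀ x ∈ l, x = l.getLast hne ∨ SRel d x (l.getLast hne) := by
  have hdec := List.dropLast_append_getLast hne
  intro x hx
  rw [← hdec] at hx h
  rcases List.mem_append.1 hx with hx | hx
  · rw [List.pairwise_append] at h
    exact Or.inr (h.2.2 x hx _ (List.mem_singleton_self _))
  · exact Or.inl (List.mem_singleton.1 hx)

lemma SP_decomp (hd : 3 ≤ d) (hr1 : 1 ≤ r) (hr2 : 2 * r < d) (M N : ℕ) :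
    SP d r M N =
      ((Tinf d r M N ∪ Tlast d r r M N) ∪ Tlast d r (d - r) M N) ∪ Tlast d r d M N := by
  ext l
  constructor
  · intro hl
    have hl' := hl
    rw [SP, Set.mem_setOf_eq, isSchur_iff_pairwise] at hl'
    obtain ⟨⟨hAll, hPw⟩, hlen, hsum⟩ := hl'
    by_cases hne : l = []
    · subst hne
      exact Or.inl (Or.inl (Or.inl ⟨hl, by simp⟩))
    · set s := l.getLast hne with hs
      have hsl : s ∈ l := List.getLast_mem hne
      have hlast : l.getLast? = some s := List.getLast?_eq_getLast_of_ne_nil hne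
      have hsall := hAll s hsl
      by_cases hsd : s ≤ d
      · rcases allowed_cases_le_d hr1 hr2 hsall hsd with h | h | h
        · exact Or.inl (Or.inl (Or.inr ⟨hl, by rw [hlast, h]⟩))
        · exact Or.inl (Or.inr ⟨hl, by rw [hlast, h]⟩)
        · exact Or.inr ⟨hl, by rw [hlast, h]⟩
      · refine Or.inl (Or.inl (Or.inl ⟨hl, ?_⟩))
        intro x hx
        rcases forall_srel_getLast hPw hne x hx with h | h
        · omega
        · have := h.1; omega
  · rintro ((((h | h) | h)) | h) <;> exact h.1

lemma disj_inf_last {s M N : ℕ} (hs : s ≤ d) :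
    Disjoint (Tinf d r M N) (Tlast d r s M N) := by
  rw [Set.disjoint_left]
  rintro l ⟨_, hgt⟩ ⟨_, hlast⟩
  obtain ⟨ys, rfl⟩ := List.getLast?_eq_some_iff.1 hlast
  have : s ∈ ys ++ [s] := by simp
  have := hgt s this
  omega

lemma disj_last_last {s1 s2 M N : ℕ} (hne : s1 ≠ s2) :
    Disjoint (Tlast d r s1 M N) (Tlast d r s2 M N) := by
  rw [Set.disjoint_left]
  rintro l ⟨_, h1⟩ ⟨_, h2⟩
  rw [h1] at h2
  exact hne (Option.some_injective _ h2)

lemma beta_decomp (hd : 3 ≤ d) (hr1 : 1 ≤ r) (hr2 : 2 * r < d) (M N : ℕ) :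
    schurBeta d r M N = (Tinf d r M N).ncard + (Tlast d r r M N).ncard
      + (Tlast d r (d - r) M N).ncard + (Tlast d r d M N).ncard := by
  rw [schurBeta_eq, SP_decomp hd hr1 hr2]
  rw [Set.ncard_union_eq ?d3 ?f5 ?f6, Set.ncard_union_eq ?d2 ?f3 ?f4,
      Set.ncard_union_eq ?d1 ?f1 ?f2]
  case d1 => exact disj_inf_last (by omega)
  case d2 =>
    exact Set.disjoint_union_left.mpr
      ⟨disj_inf_last (by omega), disj_last_last (by omega)⟩
  case d3 =>
    exact Set.disjoint_union_left.mpr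
      ⟨Set.disjoint_union_left.mpr ⟨disj_inf_last le_rfl, disj_last_last (by omega)⟩,
        disj_last_last (by omega)⟩
  case f1 => exact Tinf_finite d r M N
  case f2 => exact Tlast_finite d r r M N
  case f3 => exact (Tinf_finite d r M N).union (Tlast_finite d r r M N)
  case f4 => exact Tlast_finite d r (d - r) M N
  case f5 =>
    exact ((Tinf_finite d r M N).union (Tlast_finite d r r M N)).union
      (Tlast_finite d r (d - r) M N)
  case f6 => exact Tlast_finite d r d M N

end SchurQD

namespace SchurQD
variable {d r : ℕ}

lemma Tinf_eq_empty {M N : ℕ} (h : N < M * d) : Tinf d r M N = ∅ := by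
  ext l
  simp only [Set.mem_empty_iff_false, iff_false]
  rintro ⟨⟨_, hlen, hsum⟩, hgt⟩
  have h1 : d * l.length ≤ l.sum := mul_length_le_sum (fun x hx => le_of_lt (hgt x hx))
  rw [hlen, hsum] at h1
  have h2 : d * M = M * d := mul_comm _ _
  omega

lemma Tlast_eq_empty {s c' M N : ℕ} (hcross : ∀ x, SRel d x s → c' ≤ x)
    (h : ∀ m, M = m + 1 → N < c' * m + s) : Tlast d r s M N = ∅ := by
  ext l
  simp only [Set.mem_empty_iff_false, iff_false]
  rintro ⟨⟨hSch, hlen, hsum⟩, hlast⟩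
  obtain ⟨init, rfl⟩ := List.getLast?_eq_some_iff.1 hlast
  rw [isSchur_iff_pairwise] at hSch
  rw [List.pairwise_append] at hSch
  have hcr := hSch.2.2.2
  have h1 : c' * init.length ≤ init.sum :=
    mul_length_le_sum (fun x hx => hcross x (hcr x hx s (List.mem_singleton_self s)))
  rw [List.length_append] at hlen
  rw [List.sum_append, List.sum_singleton] at hsum
  simp only [List.length_singleton] at hlen
  have h2 := h init.length (by omega)
  generalize hX : c' * init.length = X at h1 h2
  omega

/-- Counting: all-parts-big Schur partitions. -/
lemma card_Tinf (m n : ℕ) :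
    (Tinf d r m (n + m * (1 * d))).ncard = schurBeta d r m n := by
  rw [← image_shift_eq, Set.ncard_image_of_injective _ (shift_injective (1 * d)),
    schurBeta_eq]

lemma sep_true_eq (m n : ℕ) :
    {l | l ∈ SP d r m n ∧ ∀ x ∈ l, True} = SP d r m n := by
  ext l; simp

lemma card_Tlast_r (hd : 3 ≤ d) (hr1 : 1 ≤ r) (hr2 : 2 * r < d) (m n : ℕ) :
    (Tlast d r r (m + 1) (n + m * (1 * d) + r)).ncard = schurBeta d r m n := by
  rw [← image_r hd hr1 hr2, Set.ncard_image_of_injective _ (appendMap_injective _ _),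
    sep_true_eq, schurBeta_eq]

lemma card_Tlast_d (hd : 3 ≤ d) (hr1 : 1 ≤ r) (hr2 : 2 * r < d) (m n : ℕ) :
    (Tlast d r d (m + 1) (n + m * (2 * d) + d)).ncard = schurBeta d r m n := by
  rw [← image_d hd hr1 hr2, Set.ncard_image_of_injective _ (appendMap_injective _ _),
    sep_true_eq, schurBeta_eq]

lemma SPge_eq (hd : 3 ≤ d) (hr1 : 1 ≤ r) (hr2 : 2 * r < d) (m n : ℕ) :
    {l | l ∈ SP d r m n ∧ ∀ x ∈ l, d - r ≤ x} =
      SP d r m n \ Tlast d r r m n := by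
  ext l
  simp only [Set.mem_setOf_eq, Set.mem_diff]
  constructor
  · rintro ⟨hl, hge⟩
    refine ⟨hl, ?_⟩
    rintro ⟨_, hlast⟩
    obtain ⟨init, rfl⟩ := List.getLast?_eq_some_iff.1 hlast
    have : r ∈ init ++ [r] := by simp
    have := hge r this
    omega
  · rintro ⟨hl, hnot⟩
    refine ⟨hl, ?_⟩
    intro x hx
    by_contra hlt
    push_neg at hlt
    have hl' := hl
    rw [SP, Set.mem_setOf_eq, isSchur_iff_pairwise] at hl'
    obtain ⟨⟨hAll, hPw⟩, _, _⟩ := hl'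
    have hxr : x = r := allowed_eq_r_of_lt hr1 hr2 (hAll x hx) hlt
    have hne : l ≠ [] := by rintro rfl; simp at hx
    rcases forall_srel_getLast hPw hne x hx with h | h
    · apply hnot
      refine ⟨hl, ?_⟩
      rw [List.getLast?_eq_getLast_of_ne_nil hne, ← h, hxr]
    · have := h.1; omega

lemma card_Tlast_dr (hd : 3 ≤ d) (hr1 : 1 ≤ r) (hr2 : 2 * r < d) (m n : ℕ) :
    (Tlast d r (d - r) (m + 1) (n + m * (1 * d) + (d - r))).ncard
      + (Tlast d r r m n).ncard = schurBeta d r m n := by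
  rw [← image_dr hd hr1 hr2, Set.ncard_image_of_injective _ (appendMap_injective _ _),
    SPge_eq hd hr1 hr2, schurBeta_eq]
  exact Set.ncard_diff_add_ncard_of_subset (fun l hl => hl.1) (SP_finite d r m n)

end SchurQD

namespace SchurQD
variable {d r : ℕ}

open scoped ENNReal

/-- Triangular numbers. -/
def tri : ℕ → ℕ
  | 0 => 0
  | n + 1 => tri n + n

lemma tri_ge (N : ℕ) : ∀ m, N * (m - N) ≤ tri m := by
  intro m
  induction m with
  | zero => simp [tri]
  | succ m ih =>
    by_cases h : m + 1 ≤ N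
    · have : m + 1 - N = 0 := by omega
      simp [this, tri]
    · push_neg at h
      have hN : N ≤ m := by omega
      have h1 : m + 1 - N = (m - N) + 1 := by omega
      rw [h1, Nat.mul_add, Nat.mul_one]
      exact add_le_add ih hN

/-- Remove the staircase `d * (position from the end)` from each entry. -/
def stair (d : ℕ) : List ℕ → List ℕ
  | [] => []
  | a :: t => (a - d * t.length) :: stair d t

@[simp] lemma stair_length (l : List ℕ) : (stair d l).length = l.length := by
  induction l with
  | nil => rfl
  | cons a t ih => simp [stair, ih]

lemma schur_head_big : ∀ {a : ℕ} {t : List ℕ}, (a :: t).Pairwise (SRel d) →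
    (∀ x ∈ a :: t, 0 < x) → d * t.length < a := by
  intro a t
  induction t generalizing a with
  | nil => intro _ hpos; simpa using hpos a (by simp)
  | cons b t' ih =>
    intro hpw hpos
    rw [List.pairwise_cons] at hpw
    have hab : SRel d a b := hpw.1 b (by simp)
    have hb : d * t'.length < b := ih hpw.2 (fun x hx => hpos x (List.mem_cons_of_mem a hx))
    have he : d * (b :: t').length = d * t'.length + d := by
      simp [List.length_cons]; ring
    have := hab.1
    omega

lemma stair_pos : ∀ {l : List ℕ}, l.Pairwise (SRel d) → (∀ x ∈ l, 0 < x) →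
    ∀ x ∈ stair d l, 0 < x := by
  intro l
  induction l with
  | nil => intro _ _ x hx; simp [stair] at hx
  | cons a t ih =>
    intro hpw hpos x hx
    rcases List.mem_cons.1 hx with h | h
    · have := schur_head_big hpw hpos
      omega
    · exact ih ((List.pairwise_cons.1 hpw).2)
        (fun y hy => hpos y (List.mem_cons_of_mem a hy)) x h

lemma stair_sum : ∀ {l : List ℕ}, l.Pairwise (SRel d) → (∀ x ∈ l, 0 < x) →
    (stair d l).sum + d * tri l.length = l.sum := by
  intro l
  induction l with
  | nil => simp [stair, tri]
  | cons a t ih =>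
    intro hpw hpos
    have hhead := schur_head_big hpw hpos
    have ht := ih ((List.pairwise_cons.1 hpw).2)
      (fun y hy => hpos y (List.mem_cons_of_mem a hy))
    simp only [stair, List.sum_cons, List.length_cons, tri]
    have h1 : d * (tri t.length + t.length) = d * tri t.length + d * t.length := by ring
    omega

lemma stair_inj : ∀ {l1 l2 : List ℕ}, l1.Pairwise (SRel d) → (∀ x ∈ l1, 0 < x) →
    l2.Pairwise (SRel d) → (∀ x ∈ l2, 0 < x) → stair d l1 = stair d l2 → l1 = l2 := by
  intro l1
  induction l1 with
  | nil =>
    intro l2 _ _ _ _ he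
    cases l2 with
    | nil => rfl
    | cons b t2 => simp [stair] at he
  | cons a t1 ih =>
    intro l2 hpw1 hpos1 hpw2 hpos2 he
    cases l2 with
    | nil => simp [stair] at he
    | cons b t2 =>
      simp only [stair, List.cons.injEq] at he
      obtain ⟨hhead, htail⟩ := he
      have ht : t1 = t2 := ih ((List.pairwise_cons.1 hpw1).2)
        (fun y hy => hpos1 y (List.mem_cons_of_mem a hy))
        ((List.pairwise_cons.1 hpw2).2)
        (fun y hy => hpos2 y (List.mem_cons_of_mem b hy)) htail
      subst ht
      have h1 := schur_head_big hpw1 hpos1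
      have h2 := schur_head_big hpw2 hpos2
      have : a = b := by omega
      rw [this]

/-- Schur partitions with a given number of parts. -/
def SL (d r m : ℕ) : Set (List ℕ) := {l | IsSchurPartition d r l ∧ l.length = m}

/-- Positive lists with a given number of parts. -/
def PL (m : ℕ) : Set (List ℕ) := {l | l.length = m ∧ ∀ x ∈ l, 0 < x}

lemma tsum_PL_le (s : ℝ≥0∞) : ∀ m : ℕ, ∑' l : PL m, s ^ (l : List ℕ).sum ≤ (s * (1 - s)⁻¹) ^ m := by
  intro m
  induction m with
  | zero =>
    have hPL : PL 0 = {([] : List ℕ)} := by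
      ext l
      constructor
      · rintro ⟨h, -⟩; exact List.length_eq_zero_iff.1 h
      · rintro rfl; exact ⟨rfl, by simp⟩
    rw [hPL]
    rw [tsum_singleton ([] : List ℕ) (fun l => s ^ l.sum)]
    simp
  | succ m ih =>
    set i : PL (m + 1) → ℕ × PL m := fun L =>
      (L.1.headI - 1, ⟨L.1.tail, by
        obtain ⟨L, hlen, hpos⟩ := L
        cases L with
        | nil => simp at hlen
        | cons a t =>
          exact ⟨by simpa using hlen, fun x hx => hpos x (by simp [List.tail]; right; simpa using hx)⟩⟩) with hi
    have hinj : Function.Injective i := by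
      rintro ⟨L1, hlen1, hpos1⟩ ⟨L2, hlen2, hpos2⟩ h
      cases L1 with
      | nil => simp at hlen1
      | cons a1 t1 =>
        cases L2 with
        | nil => simp at hlen2
        | cons a2 t2 =>
          simp only [hi, Prod.mk.injEq, Subtype.mk.injEq, List.headI_cons, List.tail_cons] at h
          have ha1 := hpos1 a1 (by simp)
          have ha2 := hpos2 a2 (by simp)
          have : a1 = a2 := by omega
          simp [this, h.2]
    have key : ∀ L : PL (m + 1), s ^ (L : List ℕ).sum
        = s ^ ((i L).1 + 1) * s ^ ((i L).2 : List ℕ).sum := by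
      rintro ⟨L, hlen, hpos⟩
      cases L with
      | nil => simp at hlen
      | cons a t =>
        have ha := hpos a (by simp)
        have h1 : a - 1 + 1 = a := by omega
        simp only [hi, List.headI_cons, List.tail_cons, List.sum_cons, h1]
        rw [← pow_add]
    calc ∑' l : PL (m + 1), s ^ (l : List ℕ).sum
        = ∑' L : PL (m + 1), s ^ ((i L).1 + 1) * s ^ ((i L).2 : List ℕ).sum :=
          tsum_congr key
      _ ≤ ∑' p : ℕ × PL m, s ^ (p.1 + 1) * s ^ (p.2 : List ℕ).sum :=
          ENNReal.tsum_comp_le_tsum_of_injective hinj _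
      _ = ∑' j : ℕ, ∑' l : PL m, s ^ (j + 1) * s ^ (l : List ℕ).sum := ENNReal.tsum_prod'
      _ = (∑' j : ℕ, s ^ (j + 1)) * ∑' l : PL m, s ^ (l : List ℕ).sum := by
          simp_rw [ENNReal.tsum_mul_left]
          rw [ENNReal.tsum_mul_right]
      _ ≤ (s * (1 - s)⁻¹) * (s * (1 - s)⁻¹) ^ m := by
          rw [ENNReal.tsum_geometric_add_one]
          exact mul_le_mul_right ih _
      _ = (s * (1 - s)⁻¹) ^ (m + 1) := (pow_succ' _ _).symm

end SchurQD

namespace SchurQD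
variable {d r : ℕ}

open scoped ENNReal

lemma SL_pospw {l : List ℕ} (h : IsSchurPartition d r l) :
    l.Pairwise (SRel d) ∧ ∀ x ∈ l, 0 < x := by
  rw [isSchur_iff_pairwise] at h
  exact ⟨h.2, fun x hx => (h.1 x hx).1⟩

lemma tsum_SL_le (s : ℝ≥0∞) (m : ℕ) :
    ∑' l : SL d r m, s ^ (l : List ℕ).sum ≤ s ^ (d * tri m) * (s * (1 - s)⁻¹) ^ m := by
  set i : SL d r m → PL m := fun L => ⟨stair d L.1, by
    obtain ⟨l, hSch, hlen⟩ := L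
    obtain ⟨hpw, hpos⟩ := SL_pospw hSch
    exact ⟨by simp [hlen], stair_pos hpw hpos⟩⟩ with hi
  have hinj : Function.Injective i := by
    rintro ⟨l1, h1, hl1⟩ ⟨l2, h2, hl2⟩ h
    obtain ⟨hpw1, hpos1⟩ := SL_pospw h1
    obtain ⟨hpw2, hpos2⟩ := SL_pospw h2
    simp only [hi, Subtype.mk.injEq] at h ⊢
    exact Subtype.ext (stair_inj hpw1 hpos1 hpw2 hpos2 h)
  have key : ∀ L : SL d r m, s ^ (L : List ℕ).sum
      = s ^ (d * tri m) * s ^ ((i L : List ℕ)).sum := by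
    rintro ⟨l, hSch, hlen⟩
    obtain ⟨hpw, hpos⟩ := SL_pospw hSch
    have := stair_sum hpw hpos
    rw [hlen] at this
    simp only [hi]
    rw [← pow_add]
    congr 1
    omega
  calc ∑' l : SL d r m, s ^ (l : List ℕ).sum
      = ∑' L : SL d r m, s ^ (d * tri m) * s ^ ((i L : List ℕ)).sum := tsum_congr key
    _ = s ^ (d * tri m) * ∑' L : SL d r m, s ^ ((i L : List ℕ)).sum :=
        ENNReal.tsum_mul_left
    _ ≤ s ^ (d * tri m) * ∑' l : PL m, s ^ (l : List ℕ).sum :=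
        mul_le_mul_right (ENNReal.tsum_comp_le_tsum_of_injective hinj _) _
    _ ≤ s ^ (d * tri m) * (s * (1 - s)⁻¹) ^ m := mul_le_mul_right (tsum_PL_le s m) _

lemma tsum_const_set {α : Type*} {S : Set α} (hS : S.Finite) (c : ℝ≥0∞) :
    ∑' _ : S, c = S.ncard * c := by
  have := hS.fintype
  rw [tsum_fintype, Finset.sum_const, nsmul_eq_mul]
  congr 1
  rw [← Nat.card_coe_set_eq, Nat.card_eq_fintype_card]
  rfl

/-- connecting `schurBeta` rows with sums over Schur lists. -/
lemma beta_row (s : ℝ≥0∞) (m : ℕ) :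
    ∑' n : ℕ, (schurBeta d r m n : ℝ≥0∞) * s ^ n = ∑' l : SL d r m, s ^ (l : List ℕ).sum := by
  rw [← Equiv.tsum_eq (Equiv.sigmaFiberEquiv (fun l : SL d r m => (l : List ℕ).sum))
    (fun l => s ^ (l : List ℕ).sum), ENNReal.tsum_sigma']
  apply tsum_congr
  intro n
  have hcongr : ∀ L : {l : SL d r m // (l : List ℕ).sum = n},
      s ^ (((Equiv.sigmaFiberEquiv (fun l : SL d r m => (l : List ℕ).sum)) ⟨n, L⟩
        : SL d r m) : List ℕ).sum = s ^ n := by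
    rintro ⟨⟨l, hl⟩, hsum⟩
    simp [Equiv.sigmaFiberEquiv, hsum]
  rw [tsum_congr hcongr]
  have e2 : {l : SL d r m // (l : List ℕ).sum = n} ≃ SP d r m n :=
    { toFun := fun L => ⟨L.1.1, L.1.2.1, L.1.2.2, L.2⟩
      invFun := fun L => ⟨⟨L.1, L.2.1, L.2.2.1⟩, L.2.2.2⟩
      left_inv := fun L => rfl
      right_inv := fun L => rfl }
  have h3 : ∑' _ : {l : SL d r m // (l : List ℕ).sum = n}, s ^ n
      = ∑' _ : SP d r m n, s ^ n := Equiv.tsum_eq e2 (fun _ => s ^ n)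
  rw [h3, tsum_const_set (SP_finite d r m n) (s ^ n), schurBeta_eq]

lemma master_ne_top (hd : 3 ≤ d) {t s : ℝ≥0∞} (ht : t ≤ 1) (hs : s < 1) :
    ∑' p : ℕ × ℕ, (schurBeta d r p.1 p.2 : ℝ≥0∞) * t ^ p.1 * s ^ p.2 ≠ ⊤ := by
  set K := (1 - s)⁻¹ with hKdef
  have hs1 : s ≤ 1 := hs.le
  have hKne : K ≠ ⊤ := by
    rw [hKdef, Ne, ENNReal.inv_eq_top]
    intro h
    rw [tsub_eq_zero_iff_le] at h
    exact absurd h (not_le.mpr hs)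
  have hK1 : 1 ≤ K := by
    rw [hKdef, ENNReal.le_inv_iff_mul_le, one_mul]
    exact tsub_le_self
  have hK0 : 2 * K ≠ 0 := by
    intro h
    rcases mul_eq_zero.1 h with h | h
    · exact two_ne_zero h
    · rw [h] at hK1; exact absurd hK1 (by simp)
  have hKt : 2 * K ≠ ⊤ := ENNReal.mul_ne_top (by simp) hKne
  -- choose N with s ^ N * (2 * K) ≤ 1
  obtain ⟨N, hN⟩ : ∃ N : ℕ, s ^ N * (2 * K) ≤ 1 := by
    have hε : (0 : ℝ≥0∞) < (2 * K)⁻¹ := ENNReal.inv_pos.2 hKt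
    have := (ENNReal.tendsto_pow_atTop_nhds_zero_of_lt_one hs).eventually
      (gt_mem_nhds hε)
    obtain ⟨N, hsN⟩ := this.exists
    refine ⟨N, ?_⟩
    calc s ^ N * (2 * K) ≤ (2 * K)⁻¹ * (2 * K) := mul_le_mul_left hsN.le _
      _ = 1 := ENNReal.inv_mul_cancel hK0 hKt
  have hsK : s ^ N * K ≤ 2⁻¹ := by
    rw [ENNReal.le_inv_iff_mul_le]
    calc s ^ N * K * 2 = s ^ N * (2 * K) := by ring
      _ ≤ 1 := hN
  -- pointwise bound on the row series
  have hpoint : ∀ m : ℕ, t ^ m * (s ^ (d * tri m) * (s * K) ^ m)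
      ≤ K ^ N * 2 ^ N * 2⁻¹ ^ m := by
    intro m
    have h1 : t ^ m * (s ^ (d * tri m) * (s * K) ^ m) ≤ s ^ (d * tri m) * K ^ m := by
      calc t ^ m * (s ^ (d * tri m) * (s * K) ^ m)
          ≤ 1 ^ m * (s ^ (d * tri m) * (s * K) ^ m) :=
            mul_le_mul_left (pow_le_pow_left' ht m) _
        _ = s ^ (d * tri m) * (s * K) ^ m := by rw [one_pow, one_mul]
        _ ≤ s ^ (d * tri m) * (1 * K) ^ m :=
            mul_le_mul_right (pow_le_pow_left' (mul_le_mul_left hs1 K) m) _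
        _ = s ^ (d * tri m) * K ^ m := by rw [one_mul]
    have h2 : s ^ (d * tri m) ≤ (s ^ N) ^ (m - N) := by
      calc s ^ (d * tri m) ≤ s ^ (N * (m - N)) := by
            apply pow_le_pow_right_of_le_one' hs1
            calc N * (m - N) ≤ tri m := tri_ge N m
              _ ≤ d * tri m := Nat.le_mul_of_pos_left _ (by omega)
        _ = (s ^ N) ^ (m - N) := by rw [← pow_mul]
    have h3 : t ^ m * (s ^ (d * tri m) * (s * K) ^ m) ≤ (s ^ N) ^ (m - N) * K ^ m :=
      h1.trans (mul_le_mul_left h2 _)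
    rcases le_or_gt m N with hmN | hmN
    · have : (m : ℕ) - N = 0 := by omega
      rw [this, pow_zero, one_mul] at h3
      refine h3.trans ?_
      calc K ^ m ≤ K ^ N := pow_le_pow_right' hK1 hmN
        _ = K ^ N * 1 := (mul_one _).symm
        _ ≤ K ^ N * (2 ^ N * 2⁻¹ ^ m) := by
            apply mul_le_mul_right
            have : (1 : ℝ≥0∞) = 2 ^ m * 2⁻¹ ^ m := by
              rw [← mul_pow, ENNReal.mul_inv_cancel two_ne_zero (by simp), one_pow]
            rw [this]
            exact mul_le_mul_left (pow_le_pow_right' (by norm_num) hmN) _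
        _ = K ^ N * 2 ^ N * 2⁻¹ ^ m := by rw [mul_assoc]
    · have hNm : N ≤ m := hmN.le
      refine h3.trans ?_
      have hKsplit : K ^ m = K ^ (m - N) * K ^ N := by
        rw [← pow_add]; congr 1; omega
      rw [hKsplit, ← mul_assoc, ← mul_pow]
      have : (s ^ N * K) ^ (m - N) ≤ 2⁻¹ ^ (m - N) := pow_le_pow_left' hsK _
      calc (s ^ N * K) ^ (m - N) * K ^ N ≤ 2⁻¹ ^ (m - N) * K ^ N :=
            mul_le_mul_left this _
        _ = K ^ N * 2⁻¹ ^ (m - N) := mul_comm _ _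
        _ = K ^ N * (2 ^ N * 2⁻¹ ^ m) := by
            congr 1
            have h4 : (2 : ℝ≥0∞)⁻¹ ^ m = 2⁻¹ ^ (m - N) * 2⁻¹ ^ N := by
              rw [← pow_add]; congr 1; omega
            rw [h4, ← mul_assoc, mul_comm ((2 : ℝ≥0∞) ^ N) _, mul_assoc]
            have h6 : (2 : ℝ≥0∞) ^ N * 2⁻¹ ^ N = 1 := by
              rw [← mul_pow, ENNReal.mul_inv_cancel two_ne_zero (by simp), one_pow]
            rw [h6, mul_one]
        _ = K ^ N * 2 ^ N * 2⁻¹ ^ m := by rw [mul_assoc]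
  -- assemble
  have hrow : ∀ m : ℕ, ∑' n : ℕ, (schurBeta d r m n : ℝ≥0∞) * t ^ m * s ^ n
      ≤ K ^ N * 2 ^ N * 2⁻¹ ^ m := by
    intro m
    have e1 : ∑' n : ℕ, (schurBeta d r m n : ℝ≥0∞) * t ^ m * s ^ n
        = t ^ m * ∑' n : ℕ, (schurBeta d r m n : ℝ≥0∞) * s ^ n := by
      rw [← ENNReal.tsum_mul_left]
      exact tsum_congr fun n => by ring
    rw [e1, beta_row]
    refine le_trans (mul_le_mul_right (tsum_SL_le s m) _) (hpoint m)
  apply ne_top_of_le_ne_top (b := K ^ N * 2 ^ N * (1 - 2⁻¹)⁻¹)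
  · apply ENNReal.mul_ne_top
    · exact ENNReal.mul_ne_top (ENNReal.pow_ne_top hKne) (by simp)
    · have h5 : (1 - 2⁻¹ : ℝ≥0∞)⁻¹ = 2 := by
        rw [ENNReal.one_sub_inv_two, inv_inv]
      rw [h5]
      simp
  · rw [ENNReal.tsum_prod']
    calc ∑' m : ℕ, ∑' n : ℕ, (schurBeta d r m n : ℝ≥0∞) * t ^ m * s ^ n
        ≤ ∑' m : ℕ, K ^ N * 2 ^ N * 2⁻¹ ^ m := ENNReal.tsum_le_tsum hrow
      _ = K ^ N * 2 ^ N * ∑' m : ℕ, 2⁻¹ ^ m := ENNReal.tsum_mul_left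
      _ = K ^ N * 2 ^ N * (1 - 2⁻¹)⁻¹ := by rw [ENNReal.tsum_geometric]

end SchurQD

namespace SchurQD
variable {d r : ℕ}

open scoped ENNReal NNReal

lemma summable_master_real (hd : 3 ≤ d) (x q : ℂ) (hx : ‖x‖ < 1) (hq : ‖q‖ < 1) :
    Summable (fun p : ℕ × ℕ => (schurBeta d r p.1 p.2 : ℝ) * ‖x‖ ^ p.1 * ‖q‖ ^ p.2) := by
  set t : ℝ≥0 := ‖x‖₊ with htdef
  set s : ℝ≥0 := ‖q‖₊ with hsdef
  have ht1 : (t : ℝ≥0∞) ≤ 1 := by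
    rw [← ENNReal.coe_one, ENNReal.coe_le_coe]
    rw [← NNReal.coe_le_coe]
    simpa [htdef] using hx.le
  have hs1 : (s : ℝ≥0∞) < 1 := by
    rw [← ENNReal.coe_one, ENNReal.coe_lt_coe]
    rw [← NNReal.coe_lt_coe]
    simpa [hsdef] using hq
  have hne := master_ne_top (r := r) hd ht1 hs1
  have hg : Summable (fun p : ℕ × ℕ => (schurBeta d r p.1 p.2 : ℝ≥0) * t ^ p.1 * s ^ p.2) := by
    rw [← ENNReal.tsum_coe_ne_top_iff_summable]
    have hco : (fun p : ℕ × ℕ =>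
        ((schurBeta d r p.1 p.2 * t ^ p.1 * s ^ p.2 : ℝ≥0) : ℝ≥0∞))
        = fun p : ℕ × ℕ => (schurBeta d r p.1 p.2 : ℝ≥0∞) * (t : ℝ≥0∞) ^ p.1
            * (s : ℝ≥0∞) ^ p.2 := by
      funext p
      push_cast
      rfl
    rw [hco]
    exact hne
  have := NNReal.summable_coe.2 hg
  apply this.congr
  intro p
  push_cast
  rfl

lemma summable_coeff (hd : 3 ≤ d) (a : ℕ × ℕ → ℕ)
    (hle : ∀ p : ℕ × ℕ, a p ≤ schurBeta d r p.1 p.2)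
    (x q : ℂ) (hx : ‖x‖ < 1) (hq : ‖q‖ < 1) :
    Summable (fun p : ℕ × ℕ => (a p : ℂ) * x ^ p.1 * q ^ p.2) := by
  apply Summable.of_norm
  have heq : ∀ p : ℕ × ℕ, ‖(a p : ℂ) * x ^ p.1 * q ^ p.2‖
      = (a p : ℝ) * ‖x‖ ^ p.1 * ‖q‖ ^ p.2 := by
    intro p
    rw [norm_mul, norm_mul, norm_pow, norm_pow, Complex.norm_natCast]
  apply Summable.congr _ (fun p => (heq p).symm)
  refine Summable.of_nonneg_of_le (fun p => by positivity) (fun p => ?_)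
    (summable_master_real (r := r) hd x q hx hq)
  apply mul_le_mul_of_nonneg_right _ (by positivity)
  apply mul_le_mul_of_nonneg_right _ (by positivity)
  exact_mod_cast hle p

lemma Tinf_le_beta (M N : ℕ) : (Tinf d r M N).ncard ≤ schurBeta d r M N :=
  Set.ncard_le_ncard (fun l hl => hl.1) (SP_finite d r M N)

lemma Tlast_le_beta (s M N : ℕ) : (Tlast d r s M N).ncard ≤ schurBeta d r M N :=
  Set.ncard_le_ncard (fun l hl => hl.1) (SP_finite d r M N)

lemma norm_arg_lt (x q : ℂ) (hx : ‖x‖ < 1) (hq : ‖q‖ < 1) (k : ℕ) :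
    ‖x * q ^ k‖ < 1 := by
  rw [norm_mul, norm_pow]
  calc ‖x‖ * ‖q‖ ^ k ≤ ‖x‖ * 1 := by
        apply mul_le_mul_of_nonneg_left _ (norm_nonneg x)
        exact pow_le_one₀ (norm_nonneg q) hq.le
    _ < 1 := by rwa [mul_one]

end SchurQD

namespace SchurQD
variable {d r : ℕ}

lemma tsumA1 (hd : 3 ≤ d) (hr1 : 1 ≤ r) (hr2 : 2 * r < d) (y q : ℂ) :
    ∑' p : ℕ × ℕ, ((Tinf d r p.1 p.2).ncard : ℂ) * y ^ p.1 * q ^ p.2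
      = schurF d r (y * q ^ d) q := by
  have hinj : Function.Injective (fun c : ℕ × ℕ => (c.1, c.2 + c.1 * (1 * d))) := by
    rintro ⟨m1, n1⟩ ⟨m2, n2⟩ h
    simp only [Prod.mk.injEq] at h
    obtain ⟨h1, h2⟩ := h
    subst h1
    exact Prod.ext rfl (Nat.add_right_cancel h2)
  have hsupp : Function.support
      (fun p : ℕ × ℕ => ((Tinf d r p.1 p.2).ncard : ℂ) * y ^ p.1 * q ^ p.2)
      ⊆ Set.range (fun c : ℕ × ℕ => (c.1, c.2 + c.1 * (1 * d))) := by
    intro p hp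
    simp only [Function.mem_support] at hp
    by_contra hnr
    have hlt : p.2 < p.1 * d := by
      by_contra hge
      push_neg at hge
      refine hnr ⟨(p.1, p.2 - p.1 * d), ?_⟩
      have h2 : p.2 - p.1 * d + p.1 * (1 * d) = p.2 := by
        rw [one_mul]
        exact Nat.sub_add_cancel hge
      exact Prod.ext rfl h2
    rw [Tinf_eq_empty hlt] at hp
    simp [Set.ncard_empty] at hp
  rw [← Function.Injective.tsum_eq hinj hsupp, schurF]
  apply tsum_congr
  rintro ⟨m, n⟩
  simp only
  rw [card_Tinf]
  have he : n + m * (1 * d) = d * m + n := by ring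
  rw [he, pow_add, mul_pow, ← pow_mul]
  ring

lemma tsumA2 (hd : 3 ≤ d) (hr1 : 1 ≤ r) (hr2 : 2 * r < d) (y q : ℂ) :
    ∑' p : ℕ × ℕ, ((Tlast d r r p.1 p.2).ncard : ℂ) * y ^ p.1 * q ^ p.2
      = y * q ^ r * schurF d r (y * q ^ d) q := by
  have hinj : Function.Injective (fun c : ℕ × ℕ => (c.1 + 1, c.2 + c.1 * (1 * d) + r)) := by
    rintro ⟨m1, n1⟩ ⟨m2, n2⟩ h
    simp only [Prod.mk.injEq] at h
    obtain ⟨h1, h2⟩ := h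
    have hm : m1 = m2 := by omega
    subst hm
    exact Prod.ext rfl (by omega)
  have hsupp : Function.support
      (fun p : ℕ × ℕ => ((Tlast d r r p.1 p.2).ncard : ℂ) * y ^ p.1 * q ^ p.2)
      ⊆ Set.range (fun c : ℕ × ℕ => (c.1 + 1, c.2 + c.1 * (1 * d) + r)) := by
    intro p hp
    simp only [Function.mem_support] at hp
    by_contra hnr
    have hempty : Tlast d r r p.1 p.2 = ∅ := by
      apply Tlast_eq_empty (c' := d) (fun x hx => by have := hx.1; omega)
      intro m hm
      by_contra hge
      push_neg at hge
      refine hnr ⟨(m, p.2 - (d * m + r)), ?_⟩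
      have h2 : p.2 - (d * m + r) + m * (1 * d) + r = p.2 := by
        have h3 : m * (1 * d) = d * m := by ring
        rw [h3]
        omega
      exact Prod.ext hm.symm h2
    rw [hempty] at hp
    simp [Set.ncard_empty] at hp
  rw [← Function.Injective.tsum_eq hinj hsupp, schurF, ← tsum_mul_left]
  apply tsum_congr
  rintro ⟨m, n⟩
  simp only
  rw [card_Tlast_r hd hr1 hr2]
  have he : n + m * (1 * d) + r = d * m + n + r := by ring
  rw [he, pow_add, pow_add, mul_pow, ← pow_mul]
  ring

lemma tsumA4 (hd : 3 ≤ d) (hr1 : 1 ≤ r) (hr2 : 2 * r < d) (y q : ℂ) :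
    ∑' p : ℕ × ℕ, ((Tlast d r d p.1 p.2).ncard : ℂ) * y ^ p.1 * q ^ p.2
      = y * q ^ d * schurF d r (y * q ^ (2 * d)) q := by
  have hinj : Function.Injective (fun c : ℕ × ℕ => (c.1 + 1, c.2 + c.1 * (2 * d) + d)) := by
    rintro ⟨m1, n1⟩ ⟨m2, n2⟩ h
    simp only [Prod.mk.injEq] at h
    obtain ⟨h1, h2⟩ := h
    have hm : m1 = m2 := by omega
    subst hm
    exact Prod.ext rfl (by omega)
  have hsupp : Function.support
      (fun p : ℕ × ℕ => ((Tlast d r d p.1 p.2).ncard : ℂ) * y ^ p.1 * q ^ p.2)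
      ⊆ Set.range (fun c : ℕ × ℕ => (c.1 + 1, c.2 + c.1 * (2 * d) + d)) := by
    intro p hp
    simp only [Function.mem_support] at hp
    by_contra hnr
    have hempty : Tlast d r d p.1 p.2 = ∅ := by
      apply Tlast_eq_empty (c' := 2 * d) (fun x hx => by have := hx.1; omega)
      intro m hm
      by_contra hge
      push_neg at hge
      refine hnr ⟨(m, p.2 - (2 * d * m + d)), ?_⟩
      have h2 : p.2 - (2 * d * m + d) + m * (2 * d) + d = p.2 := by
        have h3 : m * (2 * d) = 2 * d * m := by ring
        rw [h3]
        omega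
      exact Prod.ext hm.symm h2
    rw [hempty] at hp
    simp [Set.ncard_empty] at hp
  rw [← Function.Injective.tsum_eq hinj hsupp, schurF, ← tsum_mul_left]
  apply tsum_congr
  rintro ⟨m, n⟩
  simp only
  rw [card_Tlast_d hd hr1 hr2]
  have he : n + m * (2 * d) + d = 2 * d * m + n + d := by ring
  rw [he, pow_add, pow_add, mul_pow, ← pow_mul]
  ring

lemma tsumA3 (hd : 3 ≤ d) (hr1 : 1 ≤ r) (hr2 : 2 * r < d) (y q : ℂ)
    (hy : ‖y‖ < 1) (hq : ‖q‖ < 1) :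
    ∑' p : ℕ × ℕ, ((Tlast d r (d - r) p.1 p.2).ncard : ℂ) * y ^ p.1 * q ^ p.2
      = y * q ^ (d - r) * schurF d r (y * q ^ d) q
        - y * q ^ (d - r)
          * (y * q ^ d * q ^ r * schurF d r (y * q ^ d * q ^ d) q) := by
  have hinj : Function.Injective
      (fun c : ℕ × ℕ => (c.1 + 1, c.2 + c.1 * (1 * d) + (d - r))) := by
    rintro ⟨m1, n1⟩ ⟨m2, n2⟩ h
    simp only [Prod.mk.injEq] at h
    obtain ⟨h1, h2⟩ := h
    have hm : m1 = m2 := by omega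
    subst hm
    exact Prod.ext rfl (by omega)
  have hsupp : Function.support
      (fun p : ℕ × ℕ => ((Tlast d r (d - r) p.1 p.2).ncard : ℂ) * y ^ p.1 * q ^ p.2)
      ⊆ Set.range (fun c : ℕ × ℕ => (c.1 + 1, c.2 + c.1 * (1 * d) + (d - r))) := by
    intro p hp
    simp only [Function.mem_support] at hp
    by_contra hnr
    have hempty : Tlast d r (d - r) p.1 p.2 = ∅ := by
      apply Tlast_eq_empty (c' := d) (fun x hx => by have := hx.1; omega)
      intro m hm
      by_contra hge
      push_neg at hge
      refine hnr ⟨(m, p.2 - (d * m + (d - r))), ?_⟩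
      have h2 : p.2 - (d * m + (d - r)) + m * (1 * d) + (d - r) = p.2 := by
        have h3 : m * (1 * d) = d * m := by ring
        rw [h3]
        omega
      exact Prod.ext hm.symm h2
    rw [hempty] at hp
    simp [Set.ncard_empty] at hp
  rw [← Function.Injective.tsum_eq hinj hsupp]
  have hz : ‖y * q ^ d‖ < 1 := norm_arg_lt y q hy hq d
  have hsum1 : Summable (fun c : ℕ × ℕ =>
      (schurBeta d r c.1 c.2 : ℂ) * (y * q ^ d) ^ c.1 * q ^ c.2) :=
    summable_coeff hd (fun c => schurBeta d r c.1 c.2) (fun c => le_rfl) _ q hz hq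
  have hsum2 : Summable (fun c : ℕ × ℕ =>
      ((Tlast d r r c.1 c.2).ncard : ℂ) * (y * q ^ d) ^ c.1 * q ^ c.2) :=
    summable_coeff hd (fun c => (Tlast d r r c.1 c.2).ncard)
      (fun c => Tlast_le_beta r c.1 c.2) _ q hz hq
  have key : ∀ c : ℕ × ℕ,
      ((Tlast d r (d - r) (c.1 + 1, c.2 + c.1 * (1 * d) + (d - r)).1
          (c.1 + 1, c.2 + c.1 * (1 * d) + (d - r)).2).ncard : ℂ)
        * y ^ (c.1 + 1, c.2 + c.1 * (1 * d) + (d - r)).1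
        * q ^ (c.1 + 1, c.2 + c.1 * (1 * d) + (d - r)).2
      = y * q ^ (d - r) * ((schurBeta d r c.1 c.2 : ℂ) * (y * q ^ d) ^ c.1 * q ^ c.2)
        - y * q ^ (d - r)
          * (((Tlast d r r c.1 c.2).ncard : ℂ) * (y * q ^ d) ^ c.1 * q ^ c.2) := by
    rintro ⟨m, n⟩
    simp only
    have hcard := card_Tlast_dr hd hr1 hr2 m n
    have hcastc : ((Tlast d r (d - r) (m + 1) (n + m * (1 * d) + (d - r))).ncard : ℂ)
        = (schurBeta d r m n : ℂ) - ((Tlast d r r m n).ncard : ℂ) := by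
      have := congrArg (Nat.cast : ℕ → ℂ) hcard
      push_cast at this
      linear_combination this
    rw [hcastc]
    have he : n + m * (1 * d) + (d - r) = d * m + n + (d - r) := by ring
    rw [he, pow_add, pow_add, mul_pow, ← pow_mul]
    ring
  rw [tsum_congr key]
  rw [Summable.tsum_sub ((hsum1.mul_left _)) ((hsum2.mul_left _))]
  rw [tsum_mul_left, tsum_mul_left]
  rw [show schurF d r (y * q ^ d) q
      = ∑' c : ℕ × ℕ, (schurBeta d r c.1 c.2 : ℂ) * (y * q ^ d) ^ c.1 * q ^ c.2 from rfl]
  rw [tsumA2 hd hr1 hr2 (y * q ^ d) q]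

end SchurQD

open SchurQD

/-- The q-difference equation satisfied by the Schur-type generating function:
`f_{d,r}(x) = (1 + x q^r + x q^{d-r}) f_{d,r}(x q^d) + x q^d (1 - x q^d) f_{d,r}(x q^{2d})`. -/
theorem schurF_qDifference (d r : ℕ) (hd : 3 ≤ d) (hr1 : 1 ≤ r) (hr2 : 2 * r < d)
    (x q : ℂ) (hq : ‖q‖ < 1) (hx : ‖x‖ < 1) :
    schurF d r x q =
      (1 + x * q ^ r + x * q ^ (d - r)) * schurF d r (x * q ^ d) q +
        x * q ^ d * (1 - x * q ^ d) * schurF d r (x * q ^ (2 * d)) q := by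
  have hS1 : Summable (fun p : ℕ × ℕ => ((Tinf d r p.1 p.2).ncard : ℂ) * x ^ p.1 * q ^ p.2) :=
    summable_coeff hd _ (fun p => Tinf_le_beta p.1 p.2) x q hx hq
  have hS2 : Summable (fun p : ℕ × ℕ => ((Tlast d r r p.1 p.2).ncard : ℂ) * x ^ p.1 * q ^ p.2) :=
    summable_coeff hd _ (fun p => Tlast_le_beta r p.1 p.2) x q hx hq
  have hS3 : Summable (fun p : ℕ × ℕ =>
      ((Tlast d r (d - r) p.1 p.2).ncard : ℂ) * x ^ p.1 * q ^ p.2) :=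
    summable_coeff hd _ (fun p => Tlast_le_beta (d - r) p.1 p.2) x q hx hq
  have hS4 : Summable (fun p : ℕ × ℕ => ((Tlast d r d p.1 p.2).ncard : ℂ) * x ^ p.1 * q ^ p.2) :=
    summable_coeff hd _ (fun p => Tlast_le_beta d p.1 p.2) x q hx hq
  have key : ∀ p : ℕ × ℕ, (schurBeta d r p.1 p.2 : ℂ) * x ^ p.1 * q ^ p.2
      = ((Tinf d r p.1 p.2).ncard : ℂ) * x ^ p.1 * q ^ p.2
        + ((Tlast d r r p.1 p.2).ncard : ℂ) * x ^ p.1 * q ^ p.2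
        + ((Tlast d r (d - r) p.1 p.2).ncard : ℂ) * x ^ p.1 * q ^ p.2
        + ((Tlast d r d p.1 p.2).ncard : ℂ) * x ^ p.1 * q ^ p.2 := by
    intro p
    rw [beta_decomp hd hr1 hr2 p.1 p.2]
    push_cast
    ring
  have harg : x * q ^ d * q ^ d = x * q ^ (2 * d) := by
    rw [mul_assoc, ← pow_add, two_mul]
  have hpow : q ^ (d - r) * q ^ r = q ^ d := by
    rw [← pow_add]
    congr 1
    omega
  calc schurF d r x q
      = ∑' p : ℕ × ℕ, (((Tinf d r p.1 p.2).ncard : ℂ) * x ^ p.1 * q ^ p.2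
        + ((Tlast d r r p.1 p.2).ncard : ℂ) * x ^ p.1 * q ^ p.2
        + ((Tlast d r (d - r) p.1 p.2).ncard : ℂ) * x ^ p.1 * q ^ p.2
        + ((Tlast d r d p.1 p.2).ncard : ℂ) * x ^ p.1 * q ^ p.2) := tsum_congr key
    _ = (∑' p : ℕ × ℕ, ((Tinf d r p.1 p.2).ncard : ℂ) * x ^ p.1 * q ^ p.2)
        + (∑' p : ℕ × ℕ, ((Tlast d r r p.1 p.2).ncard : ℂ) * x ^ p.1 * q ^ p.2)
        + (∑' p : ℕ × ℕ, ((Tlast d r (d - r) p.1 p.2).ncard : ℂ) * x ^ p.1 * q ^ p.2)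
        + (∑' p : ℕ × ℕ, ((Tlast d r d p.1 p.2).ncard : ℂ) * x ^ p.1 * q ^ p.2) := by
        rw [Summable.tsum_add ((hS1.add hS2).add hS3) hS4, Summable.tsum_add (hS1.add hS2) hS3,
          Summable.tsum_add hS1 hS2]
    _ = schurF d r (x * q ^ d) q
        + x * q ^ r * schurF d r (x * q ^ d) q
        + (x * q ^ (d - r) * schurF d r (x * q ^ d) q
          - x * q ^ (d - r) * (x * q ^ d * q ^ r * schurF d r (x * q ^ (2 * d)) q))
        + x * q ^ d * schurF d r (x * q ^ (2 * d)) q := by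
        rw [tsumA1 hd hr1 hr2 x q, tsumA2 hd hr1 hr2 x q,
          tsumA3 hd hr1 hr2 x q hx hq, tsumA4 hd hr1 hr2 x q, harg]
    _ = (1 + x * q ^ r + x * q ^ (d - r)) * schurF d r (x * q ^ d) q +
        x * q ^ d * (1 - x * q ^ d) * schurF d r (x * q ^ (2 * d)) q := by
        linear_combination (-(x ^ 2) * q ^ d * schurF d r (x * q ^ (2 * d)) q) * hpow
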